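/- Let D be an almost skew diagram, let i be the maximum index with l_{i−1} > l_i, and suppose Step B is permitted at row i (r_i ≤ r_{i−1} − 1). Let D^B be the result of performing Step B at row i, with ψ the induced row-preserving bijection from the boxes of D to the boxes of D^B and all elements associated to D^B regarded in ℂ[Σ_D] via ψ. Then for every σ ∈ C_D with σ ∉ C_{D^B}, the product C(D^B)·σ·R(D) equals 0 in ℂ[Σ_D]. -/

import Mathlib

open scoped ENat

/-- A diagram: a finite set of boxes `(i, j)` (row `i` from the top, column `j` from the left). -/
abbrev Dg := Finset (ℕ × ℕ)

/-- The set of column indices of boxes in row `i` of `D`. -/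
def row (D : Dg) (i : ℕ) : Finset ℕ := (D.filter (fun b => b.1 = i)).image Prod.snd

/-- `l_i`: the least column index in row `i`, with the convention `l_i = ∞` for an empty row. -/
noncomputable def lRow (D : Dg) (i : ℕ) : ℕ∞ := (row D i).inf (fun j => (j : ℕ∞))

/-- `r_i`: the greatest column index in row `i`, with the convention `r_i = 0` for an empty row. -/
def rRow (D : Dg) (i : ℕ) : ℕ := (row D i).sup id

/-- Index `i ≥ 2` with `l_{i-1} > l_i`. -/
def Violation (D : Dg) (i : ℕ) : Prop := 2 ≤ i ∧ lRow D i < lRow D (i - 1)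

/-- `i` is the maximum index with `l_{i-1} > l_i`. -/
def MaxViolation (D : Dg) (i : ℕ) : Prop := Violation D i ∧ ∀ i', Violation D i' → i' ≤ i

/-- No index `i ≥ 2` has `l_{i-1} > l_i`. -/
def TerminalD (D : Dg) : Prop := ∀ i, ¬ Violation D i

/-- Step A is permitted at row `i`: `l_{i-1} > l_i` and (`r_i ≥ l_{i-1} - 1` or row `i-1` empty). -/
def StepAOk (D : Dg) (i : ℕ) : Prop :=
  Violation D i ∧ (lRow D (i - 1) - 1 ≤ (rRow D i : ℕ∞) ∨ row D (i - 1) = ∅)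

/-- `l_i ≤ q < l_{i-1}`: the columns affected by Step A at row `i`. -/
def InL (D : Dg) (i q : ℕ) : Prop := lRow D i ≤ (q : ℕ∞) ∧ (q : ℕ∞) < lRow D (i - 1)

/-- `D'` is the result of performing Step A on `D` at row `i`: for each column
`l_i ≤ q < l_{i-1}`, membership of `(i, q)` and `(i-1, q)` is exchanged. -/
def IsStepA (D D' : Dg) (i : ℕ) : Prop :=
  ∀ p q : ℕ,
    (p = i → InL D i q → ((p, q) ∈ D' ↔ (i - 1, q) ∈ D)) ∧
    (p = i - 1 → InL D i q → ((p, q) ∈ D' ↔ (i, q) ∈ D)) ∧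
    (¬((p = i ∨ p = i - 1) ∧ InL D i q) → ((p, q) ∈ D' ↔ (p, q) ∈ D))

/-- Step B is permitted at row `i`: `l_{i-1} > l_i` and `r_i ≤ r_{i-1} - 1`. -/
def StepBOk (D : Dg) (i : ℕ) : Prop :=
  Violation D i ∧ rRow D i ≤ rRow D (i - 1) - 1

/-- The rows affected by Step B at row `i`: rows `p ≥ i` with `l_p = l_i`. -/
def BRow (D : Dg) (i p : ℕ) : Prop := i ≤ p ∧ lRow D p = lRow D i

/-- `D'` is the result of performing Step B on `D` at row `i`: in each row `p ≥ i` with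
`l_p = l_i`, the box `(p, l_p)` is removed and the box `(p, r_p + 1)` is added. -/
def IsStepB (D D' : Dg) (i : ℕ) : Prop :=
  ∀ p q : ℕ,
    (BRow D i p →
      ((p, q) ∈ D' ↔ (((p, q) ∈ D ∧ (q : ℕ∞) ≠ lRow D p) ∨ q = rRow D p + 1))) ∧
    (¬ BRow D i p → ((p, q) ∈ D' ↔ (p, q) ∈ D))

/-- One step of Algorithm 1: at the maximum index `i` with `l_{i-1} > l_i`, perform a
permitted Step A or Step B. -/
def AlgStep (D D' : Dg) : Prop :=
  ∃ i, MaxViolation D i ∧ ((StepAOk D i ∧ IsStepA D D' i) ∨ (StepBOk D i ∧ IsStepB D D' i))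

/-- An execution of Algorithm 1 starting from `D0`: a finite sequence of diagrams beginning
at `D0`, each obtained from the previous by a step of Algorithm 1, ending at a terminal
diagram. -/
def IsExec (D0 : Dg) (L : List Dg) : Prop :=
  L.head? = some D0 ∧ L.Chain' AlgStep ∧ ∀ Dl, L.getLast? = some Dl → TerminalD Dl

/-- The indices of nonempty rows of `D`, from top to bottom. -/
def rowIdx (D : Dg) : List ℕ := (D.image Prod.fst).sort (· ≤ ·)

/-- The lengths of the nonempty rows of `D`, read from top to bottom. -/
def rowLengths (D : Dg) : List ℕ := (rowIdx D).map (fun p => (row D p).card)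

/-- The execution `L` terminates at a diagram whose nonempty rows, read from top to bottom,
have lengths `ν 1, ν 2, …`. -/
def EndsAt (L : List Dg) (ν : ℕ → ℕ) : Prop :=
  ∃ Dl, L.getLast? = some Dl ∧ ∀ m : ℕ, (rowLengths Dl).getD m 0 = ν (m + 1)

/-- A partition, written as a weakly decreasing function on indices `1, 2, …`. -/
def IsPartition (f : ℕ → ℕ) : Prop := f 0 = 0 ∧ ∀ p, 1 ≤ p → f (p + 1) ≤ f p

/-- The partition `f` is contained in the `k × w` rectangle. -/
def InRect (f : ℕ → ℕ) (k w : ℕ) : Prop := (∀ p, k < p → f p = 0) ∧ ∀ p, f p ≤ w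

/-- The skew Young diagram `lam / mu` (boxes of `lam` not in `mu`), rows `1, …, k`. -/
def skewD (lam mu : ℕ → ℕ) (k : ℕ) : Dg :=
  (Finset.Icc 1 k).biUnion (fun p => (Finset.Icc (mu p + 1) (lam p)).image (fun q => (p, q)))

/-- `lam^∨`, the complementary partition of `lam` inside the `k × w` rectangle. -/
def dualP (lam : ℕ → ℕ) (k w : ℕ) : ℕ → ℕ :=
  fun p => if 1 ≤ p ∧ p ≤ k then w - lam (k + 1 - p) else 0

/-- `D` is row convex. -/
def RowConvex (D : Dg) : Prop :=
  ∀ i j j' j'', (i, j) ∈ D → (i, j') ∈ D → j ≤ j'' → j'' ≤ j' → (i, j'') ∈ D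

/-- `l` is weakly increasing on positions `s, s+1, …, t`. -/
def MonoL (l : ℕ → ℕ∞) (s t : ℕ) : Prop := ∀ p q, s ≤ p → p ≤ q → q ≤ t → l p ≤ l q

/-- `l` is weakly decreasing on positions `s, s+1, …, t`. -/
def AntiL (l : ℕ → ℕ∞) (s t : ℕ) : Prop := ∀ p q, s ≤ p → p ≤ q → q ≤ t → l q ≤ l p

/-- The sequence `(l_1, …, l_k)` of leftmost column indices of `D` has, for some indices
`1 ≤ a ≤ i ≤ k`, either the form `l_i ≤ l_{i+1} ≤ … ≤ l_k ≤ l_{i-1} ≤ l_{i-2} ≤ … ≤ l_1`,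
or the form
`l_a ≤ … ≤ l_{i-2} ≤ l_i ≤ … ≤ l_k ≤ l_{i-1} ≤ l_{a-1} ≤ … ≤ l_1`. -/
def LShape (D : Dg) (k : ℕ) : Prop :=
  ∃ a i, 1 ≤ a ∧ a ≤ i ∧ i ≤ k ∧
    ((MonoL (lRow D) i k ∧ (2 ≤ i → lRow D k ≤ lRow D (i - 1)) ∧ AntiL (lRow D) 1 (i - 1)) ∨
     (2 ≤ i ∧ MonoL (lRow D) a (i - 2) ∧ (a ≤ i - 2 → lRow D (i - 2) ≤ lRow D i) ∧
      MonoL (lRow D) i k ∧ lRow D k ≤ lRow D (i - 1) ∧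
      (2 ≤ a → lRow D (i - 1) ≤ lRow D (a - 1)) ∧ AntiL (lRow D) 1 (a - 1)))

/-- `D` is almost skew with nonempty rows exactly `1, …, k`: it is row convex, its `r_i`
are weakly decreasing, and its `l_i` satisfy one of the two inequality chains above. -/
def AlmostSkew (D : Dg) (k : ℕ) : Prop :=
  (∀ p, (row D p).Nonempty ↔ 1 ≤ p ∧ p ≤ k) ∧
  RowConvex D ∧
  (∀ p q, 1 ≤ p → p ≤ q → q ≤ k → rRow D q ≤ rRow D p) ∧
  LShape D k

/-- The sum `Σ σ` over all permutations preserving the value of `g` (e.g. the row or the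
column of every box), in the group algebra `ℂ[Perm α]`. -/
noncomputable def Rsum {α : Type} [Fintype α] [DecidableEq α] (g : α → ℕ) :
    MonoidAlgebra ℂ (Equiv.Perm α) :=
  ∑ σ ∈ Finset.univ.filter (fun σ : Equiv.Perm α => ∀ b, g (σ b) = g b),
    MonoidAlgebra.single σ 1

/-- The signed sum `Σ sgn(σ)·σ` over all permutations preserving the value of `g`, in the
group algebra `ℂ[Perm α]`. -/
noncomputable def Csum {α : Type} [Fintype α] [DecidableEq α] (g : α → ℕ) :
    MonoidAlgebra ℂ (Equiv.Perm α) :=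
  ∑ σ ∈ Finset.univ.filter (fun σ : Equiv.Perm α => ∀ b, g (σ b) = g b),
    MonoidAlgebra.single σ ((Equiv.Perm.sign σ : ℤ) : ℂ)

lemma mem_row' {D : Dg} {p j : ℕ} : j ∈ row D p ↔ (p, j) ∈ D := by
  simp only [row, Finset.mem_image, Finset.mem_filter]
  constructor
  · rintro ⟨⟨a, b⟩, ⟨hD, h1⟩, h2⟩
    dsimp at h1 h2; subst h1; subst h2; exact hD
  · intro h; exact ⟨(p, j), ⟨h, rfl⟩, rfl⟩

lemma lRow_le' {D : Dg} {p j : ℕ} (h : (p, j) ∈ D) : lRow D p ≤ (j : ℕ∞) :=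
  Finset.inf_le (mem_row'.2 h)

lemma le_rRow' {D : Dg} {p j : ℕ} (h : (p, j) ∈ D) : j ≤ rRow D p :=
  Finset.le_sup (f := id) (mem_row'.2 h)

lemma lRow_eq' {D : Dg} {p : ℕ} (hne : (row D p).Nonempty) :
    ∃ j : ℕ, lRow D p = (j : ℕ∞) ∧ (p, j) ∈ D := by
  obtain ⟨j, hj, hjeq⟩ := Finset.exists_mem_eq_inf (row D p) hne (fun j => (j : ℕ∞))
  exact ⟨j, hjeq, mem_row'.1 hj⟩

lemma rRow_mem' {D : Dg} {p : ℕ} (hne : (row D p).Nonempty) : (p, rRow D p) ∈ D := by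
  obtain ⟨j, hj, hjeq⟩ := Finset.exists_mem_eq_sup (row D p) hne id
  rw [rRow, hjeq]; exact mem_row'.1 hj

lemma single_neg' {α : Type} (a : Equiv.Perm α) (c : ℂ) :
    MonoidAlgebra.single a (-c) = - MonoidAlgebra.single a c := by
  exact MonoidAlgebra.single_neg a c

lemma Csum_mul_swap {α : Type} [Fintype α] [DecidableEq α] (g : α → ℕ) (τ : Equiv.Perm α)
    (hτ : ∀ b, g (τ b) = g b) (hs : Equiv.Perm.sign τ = -1) :
    Csum g * MonoidAlgebra.single τ (1 : ℂ) = - Csum g := by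
  unfold Csum
  rw [Finset.sum_mul, ← Finset.sum_neg_distrib]
  refine Finset.sum_equiv (Equiv.mulRight τ) ?_ ?_
  · intro σ'
    simp only [Finset.mem_filter, Finset.mem_univ, true_and, Equiv.coe_mulRight]
    constructor
    · intro h b
      rw [Equiv.Perm.mul_apply, h, hτ]
    · intro h b
      have h1 := h (τ⁻¹ b)
      rw [Equiv.Perm.mul_apply, (by rw [← Equiv.Perm.mul_apply, mul_inv_cancel, Equiv.Perm.one_apply] : τ (τ⁻¹ b) = b)] at h1
      have h2 := hτ (τ⁻¹ b)
      rw [(by rw [← Equiv.Perm.mul_apply, mul_inv_cancel, Equiv.Perm.one_apply] : τ (τ⁻¹ b) = b)] at h2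
      rw [h1, h2]
  · intro σ' _
    simp only [Equiv.coe_mulRight]
    rw [MonoidAlgebra.single_mul_single, mul_one, ← single_neg']
    congr 1
    rw [Equiv.Perm.sign_mul, hs]
    push_cast
    ring

lemma swap_mul_Rsum {α : Type} [Fintype α] [DecidableEq α] (h : α → ℕ) (t : Equiv.Perm α)
    (ht : ∀ b, h (t b) = h b) :
    MonoidAlgebra.single t (1 : ℂ) * Rsum h = Rsum h := by
  unfold Rsum
  rw [Finset.mul_sum]
  refine Finset.sum_equiv (Equiv.mulLeft t) ?_ ?_
  · intro σ'
    simp only [Finset.mem_filter, Finset.mem_univ, true_and, Equiv.coe_mulLeft]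
    constructor
    · intro hm b; rw [Equiv.Perm.mul_apply, ht, hm]
    · intro hm b; have := hm b; rwa [Equiv.Perm.mul_apply, ht] at this
  · intro σ' _
    simp only [Equiv.coe_mulLeft]
    rw [MonoidAlgebra.single_mul_single, one_mul]

lemma kill {α : Type} [Fintype α] [DecidableEq α] (g h : α → ℕ) (σ : Equiv.Perm α)
    (b1 b2 : α) (hne : b1 ≠ b2) (hr : h b1 = h b2) (hc : g (σ b1) = g (σ b2)) :
    Csum g * MonoidAlgebra.single σ (1 : ℂ) * Rsum h = 0 := by
  set τ := Equiv.swap (σ b1) (σ b2) with hτdef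
  set t := Equiv.swap b1 b2 with htdef
  have hτg : ∀ b, g (τ b) = g b := by
    intro b
    rcases eq_or_ne b (σ b1) with rfl | h1
    · rw [hτdef, Equiv.swap_apply_left]; exact hc.symm
    rcases eq_or_ne b (σ b2) with rfl | h2
    · rw [hτdef, Equiv.swap_apply_right]; exact hc
    · rw [hτdef, Equiv.swap_apply_of_ne_of_ne h1 h2]
  have hth : ∀ b, h (t b) = h b := by
    intro b
    rcases eq_or_ne b b1 with rfl | h1
    · rw [htdef, Equiv.swap_apply_left]; exact hr.symm
    rcases eq_or_ne b b2 with rfl | h2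
    · rw [htdef, Equiv.swap_apply_right]; exact hr
    · rw [htdef, Equiv.swap_apply_of_ne_of_ne h1 h2]
  have hsign : Equiv.Perm.sign τ = -1 :=
    Equiv.Perm.sign_swap (fun hh => hne (σ.injective hh))
  have hconj : τ * σ = σ * t := by
    rw [hτdef, htdef, Equiv.swap_apply_apply σ b1 b2]; group
  have hA := Csum_mul_swap g τ hτg hsign
  have hB := swap_mul_Rsum h t hth
  have key : MonoidAlgebra.single σ (1 : ℂ) * MonoidAlgebra.single t 1 =
      MonoidAlgebra.single τ 1 * MonoidAlgebra.single σ 1 := by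
    rw [MonoidAlgebra.single_mul_single, MonoidAlgebra.single_mul_single, hconj]
  have hXneg : Csum g * MonoidAlgebra.single σ (1 : ℂ) * Rsum h =
      -(Csum g * MonoidAlgebra.single σ (1 : ℂ) * Rsum h) := by
    conv_lhs => rw [← hB, ← mul_assoc, mul_assoc (Csum g), key, ← mul_assoc, hA, neg_mul, neg_mul]
  have h2 : (2 : ℂ) • (Csum g * MonoidAlgebra.single σ (1 : ℂ) * Rsum h) = 0 := by
    rw [two_smul]
    nth_rewrite 1 [hXneg]
    exact neg_add_cancel _
  exact (smul_eq_zero.mp h2).resolve_left two_ne_zero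

theorem pairlemma (D : Dg) (k i : ℕ)
    (hrows : ∀ p, (row D p).Nonempty ↔ 1 ≤ p ∧ p ≤ k)
    (hconvex : RowConvex D)
    (hrmono : ∀ p q, 1 ≤ p → p ≤ q → q ≤ k → rRow D q ≤ rRow D p)
    (hmax : MaxViolation D i) (hperm : StepBOk D i)
    (ψ : {x : ℕ × ℕ // x ∈ D} → ℕ × ℕ)
    (hψ : ∀ b : {x : ℕ × ℕ // x ∈ D},
      ψ b =
        if i ≤ b.val.1 ∧ lRow D b.val.1 = lRow D i ∧ (b.val.2 : ℕ∞) = lRow D b.val.1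
        then (b.val.1, rRow D b.val.1 + 1) else b.val)
    (σ : Equiv.Perm {x : ℕ × ℕ // x ∈ D})
    (hσC : ∀ b, (σ b).val.2 = b.val.2)
    (hσCB : ¬ ∀ b, (ψ (σ b)).2 = (ψ b).2) :
    ∃ b1 b2 : {x : ℕ × ℕ // x ∈ D}, b1 ≠ b2 ∧ b1.val.1 = b2.val.1 ∧
      (ψ (σ b1)).2 = (ψ (σ b2)).2 := by
  classical
  have h2i : 2 ≤ i := hmax.1.1
  have hviol : lRow D i < lRow D (i - 1) := hmax.1.2
  -- basic membership facts
  have hmemD : ∀ b : {x : ℕ × ℕ // x ∈ D}, (b.val.1, b.val.2) ∈ D := fun b => by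
    rw [Prod.mk.eta]; exact b.2
  have hrowne : ∀ b : {x : ℕ × ℕ // x ∈ D}, (row D b.val.1).Nonempty :=
    fun b => ⟨b.val.2, mem_row'.2 (hmemD b)⟩
  have hrk : ∀ b : {x : ℕ × ℕ // x ∈ D}, 1 ≤ b.val.1 ∧ b.val.1 ≤ k :=
    fun b => (hrows b.val.1).1 (hrowne b)
  -- row i nonempty, L
  have hne_i : (row D i).Nonempty := by
    by_contra h
    rw [Finset.not_nonempty_iff_eq_empty] at h
    rw [lRow, h] at hviol
    simp at hviol
  obtain ⟨L, hLeq, hLmem⟩ := lRow_eq' hne_i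
  have hik : i ≤ k := ((hrows i).1 hne_i).2
  -- row i-1 nonempty, M > L
  have hne_i1 : (row D (i - 1)).Nonempty := (hrows (i - 1)).2 ⟨by omega, by omega⟩
  obtain ⟨M, hMeq, hMmem⟩ := lRow_eq' hne_i1
  have hLM : L < M := by
    rw [hLeq, hMeq] at hviol
    exact_mod_cast hviol
  have hMr : M ≤ rRow D (i - 1) := le_rRow' hMmem
  have hrlt : rRow D i < rRow D (i - 1) := by
    have := hperm.2
    omega
  have hLri : L ≤ rRow D i := le_rRow' hLmem
  -- no violation above i
  have hnov : ∀ p, i < p → lRow D (p - 1) ≤ lRow D p := by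
    intro p hp
    by_contra hc
    push_neg at hc
    have := hmax.2 p ⟨by omega, hc⟩
    omega
  -- l on [i,k] is ≥ L
  have hlge : ∀ p, i ≤ p → (L : ℕ∞) ≤ lRow D p := by
    intro p
    induction p with
    | zero => intro h; omega
    | succ n ih =>
      intro hp
      rcases eq_or_lt_of_le hp with heq | hlt
      · rw [← heq, hLeq]
      · have h1 : i ≤ n := by omega
        calc (L : ℕ∞) ≤ lRow D n := ih h1
          _ ≤ lRow D (n + 1) := by
              have := hnov (n + 1) hlt
              simpa using this
  -- B-row characterization
  have hBeq : ∀ b : {x : ℕ × ℕ // x ∈ D}, b.val.2 = L → i ≤ b.val.1 →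
      lRow D b.val.1 = lRow D i := by
    intro b hb hi
    have hm : (b.val.1, L) ∈ D := by rw [← hb]; exact hmemD b
    rw [hLeq]
    exact le_antisymm (lRow_le' hm) (hlge _ hi)
  -- ψ column formula
  have hψ2 : ∀ b : {x : ℕ × ℕ // x ∈ D},
      (ψ b).2 =
        if i ≤ b.val.1 ∧ lRow D b.val.1 = lRow D i ∧ (b.val.2 : ℕ∞) = lRow D b.val.1
        then rRow D b.val.1 + 1 else b.val.2 := by
    intro b
    rw [hψ b]
    split <;> rfl
  have hψcol_B : ∀ b : {x : ℕ × ℕ // x ∈ D}, b.val.2 = L → i ≤ b.val.1 →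
      (ψ b).2 = rRow D b.val.1 + 1 := by
    intro b hb hi
    rw [hψ2 b, if_pos ⟨hi, hBeq b hb hi, by rw [hb, hBeq b hb hi, hLeq]⟩]
  have hψcol_ne : ∀ b : {x : ℕ × ℕ // x ∈ D}, b.val.2 ≠ L → (ψ b).2 = b.val.2 := by
    intro b hb
    rw [hψ2 b, if_neg]
    rintro ⟨-, h2, h3⟩
    rw [h2, hLeq] at h3
    exact hb (by exact_mod_cast h3)
  have hψcol_low : ∀ b : {x : ℕ × ℕ // x ∈ D}, b.val.1 < i → (ψ b).2 = b.val.2 := by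
    intro b hb
    rw [hψ2 b, if_neg]
    rintro ⟨h1, -, -⟩
    omega
  by_contra hno
  push_neg at hno
  apply hσCB
  -- key: no pair implies r-monotonicity along σ on column-L boxes
  have hkey : ∀ b : {x : ℕ × ℕ // x ∈ D}, b.val.2 = L → i ≤ (σ b).val.1 →
      rRow D b.val.1 ≤ rRow D (σ b).val.1 := by
    intro b hb hσi
    by_contra hlt
    push_neg at hlt
    have hσmem : ((σ b).val.1, L) ∈ D := by
      have := hmemD (σ b)
      rwa [hσC b, hb] at this
    have hLrσ : L ≤ rRow D (σ b).val.1 := le_rRow' hσmem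
    have hbL : (b.val.1, L) ∈ D := by rw [← hb]; exact hmemD b
    have hmemb2 : (b.val.1, rRow D (σ b).val.1 + 1) ∈ D :=
      hconvex b.val.1 L (rRow D b.val.1) (rRow D (σ b).val.1 + 1) hbL
        (rRow_mem' (hrowne b)) (by omega) (by omega)
    set b2 : {x : ℕ × ℕ // x ∈ D} := ⟨(b.val.1, rRow D (σ b).val.1 + 1), hmemb2⟩ with hb2
    have hneb : b ≠ b2 := by
      intro heq
      have := congrArg (fun x => x.val.2) heq
      simp [hb2] at this
      omega
    refine hno b b2 hneb rfl ?_
    have e1 : (ψ (σ b)).2 = rRow D (σ b).val.1 + 1 :=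
      hψcol_B (σ b) (by rw [hσC b, hb]) hσi
    have e2 : (ψ (σ b2)).2 = rRow D (σ b).val.1 + 1 := by
      rw [hψcol_ne (σ b2) (by rw [hσC b2]; simp [hb2]; omega), hσC b2]
    rw [e1, e2]
  -- low rows map to low rows
  have hlow : ∀ b : {x : ℕ × ℕ // x ∈ D}, b.val.2 = L → b.val.1 < i → (σ b).val.1 < i := by
    intro b hb hlt
    by_contra h
    push_neg at h
    have h1 := hkey b hb h
    have h2 : rRow D (i - 1) ≤ rRow D b.val.1 :=
      hrmono b.val.1 (i - 1) (hrk b).1 (by omega) (by omega)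
    have h3 : rRow D (σ b).val.1 ≤ rRow D i :=
      hrmono i (σ b).val.1 (by omega) h (hrk (σ b)).2
    omega
  -- finset setup
  set Slow : Finset {x : ℕ × ℕ // x ∈ D} :=
    Finset.univ.filter (fun b => b.val.2 = L ∧ b.val.1 < i) with hSlowdef
  set SB : Finset {x : ℕ × ℕ // x ∈ D} :=
    Finset.univ.filter (fun b => b.val.2 = L ∧ i ≤ b.val.1) with hSBdef
  have himg_low : ∀ b ∈ Slow, σ b ∈ Slow := by
    intro b hb
    obtain ⟨-, hcol, hlt⟩ := Finset.mem_filter.1 hb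
    exact Finset.mem_filter.2 ⟨Finset.mem_univ _, by rw [hσC b]; exact hcol, hlow b hcol hlt⟩
  have hSlow_img : Slow.image σ = Slow :=
    Finset.eq_of_subset_of_card_le (Finset.image_subset_iff.2 himg_low)
      (le_of_eq (Finset.card_image_of_injective _ σ.injective).symm)
  have himg_B : ∀ b ∈ SB, σ b ∈ SB := by
    intro b hb
    obtain ⟨-, hcol, hi⟩ := Finset.mem_filter.1 hb
    refine Finset.mem_filter.2 ⟨Finset.mem_univ _, by rw [hσC b]; exact hcol, ?_⟩
    by_contra hσi
    push_neg at hσi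
    have hmem : σ b ∈ Slow :=
      Finset.mem_filter.2 ⟨Finset.mem_univ _, by rw [hσC b]; exact hcol, hσi⟩
    rw [← hSlow_img] at hmem
    obtain ⟨b', hb', heq⟩ := Finset.mem_image.1 hmem
    have hbb : b' = b := σ.injective heq
    subst hbb
    obtain ⟨-, -, hlt⟩ := Finset.mem_filter.1 hb'
    omega
  have hSB_img : SB.image σ = SB :=
    Finset.eq_of_subset_of_card_le (Finset.image_subset_iff.2 himg_B)
      (le_of_eq (Finset.card_image_of_injective _ σ.injective).symm)
  have hsum : ∑ b ∈ SB, rRow D b.val.1 = ∑ b ∈ SB, rRow D (σ b).val.1 := by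
    conv_lhs => rw [← hSB_img]
    rw [Finset.sum_image (fun a _ b _ h => σ.injective h)]
  have hle : ∀ b ∈ SB, rRow D b.val.1 ≤ rRow D (σ b).val.1 := by
    intro b hb
    obtain ⟨-, hcol, -⟩ := Finset.mem_filter.1 hb
    obtain ⟨-, -, hσi⟩ := Finset.mem_filter.1 (himg_B b hb)
    exact hkey b hcol hσi
  have hreq : ∀ b ∈ SB, rRow D b.val.1 = rRow D (σ b).val.1 :=
    (Finset.sum_eq_sum_iff_of_le hle).1 hsum
  -- conclude σ preserves ψ-columns
  intro b
  by_cases hcol : b.val.2 = L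
  · by_cases hi : i ≤ b.val.1
    · have hbSB : b ∈ SB := Finset.mem_filter.2 ⟨Finset.mem_univ _, hcol, hi⟩
      obtain ⟨-, hσcol, hσi⟩ := Finset.mem_filter.1 (himg_B b hbSB)
      rw [hψcol_B (σ b) hσcol hσi, hψcol_B b hcol hi, hreq b hbSB]
    · push_neg at hi
      rw [hψcol_low (σ b) (hlow b hcol hi), hψcol_low b hi, hσC b]
  · rw [hψcol_ne (σ b) (by rw [hσC b]; exact hcol), hψcol_ne b hcol, hσC b]

/-- With `D` almost skew, `i` the maximum violating index, Step B
permitted at `i`, `D^B` the result and `ψ` the canonical row-preserving bijection, for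
every `σ ∈ C_D \ C_{D^B}` we have `C(D^B) · σ · R(D) = 0` in `ℂ[Σ_D]`. -/
theorem statement14 (D DB : Dg) (k i : ℕ) (hAS : AlmostSkew D k)
    (hmax : MaxViolation D i) (hperm : StepBOk D i) (hstep : IsStepB D DB i)
    (ψ : {x : ℕ × ℕ // x ∈ D} ≃ {x : ℕ × ℕ // x ∈ DB})
    (hψ : ∀ b : {x : ℕ × ℕ // x ∈ D},
      (ψ b).val =
        if i ≤ b.val.1 ∧ lRow D b.val.1 = lRow D i ∧ (b.val.2 : ℕ∞) = lRow D b.val.1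
        then (b.val.1, rRow D b.val.1 + 1) else b.val)
    (σ : Equiv.Perm {x : ℕ × ℕ // x ∈ D})
    (hσC : ∀ b, (σ b).val.2 = b.val.2)
    (hσCB : ¬ ∀ b, (ψ (σ b)).val.2 = (ψ b).val.2) :
    Csum (fun b : {x : ℕ × ℕ // x ∈ D} => (ψ b).val.2) * MonoidAlgebra.single σ (1 : ℂ) *
      Rsum (fun b : {x : ℕ × ℕ // x ∈ D} => b.val.1) = 0 := by
  obtain ⟨b1, b2, hne, hrow, hcol⟩ :=
    pairlemma D k i hAS.1 hAS.2.1 hAS.2.2.1 hmax hperm (fun b => (ψ b).val) hψ σ hσC hσCB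
  exact kill _ _ σ b1 b2 hne hrow hcol
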